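/- Define c_i(m) = 2^m m! d_{m-i}(m). Then the numbers c_i(m) satisfy c_i(m+1) = (4m - 2i + 2) c_i(m) + (6m - 2i + 5) c_{i-1}(m), with initial conditions c_0(0) = 1 and c_i(0) = 0 for i ≠ 0. -/

import Mathlib

open Finset

/-- Coefficients of the Boros-Moll polynomial, with `bmD m i = 0` for `i < 0` or `i > m`. -/
noncomputable def bmD (m : ℕ) (i : ℤ) : ℝ :=
  if 0 ≤ i ∧ i ≤ (m : ℤ) then
    (1 / 4 ^ m) * ∑ k ∈ Finset.Icc i.toNat m,
      (2 : ℝ) ^ k * ((2 * m - 2 * k).choose (m - k)) * ((m + k).choose k) * (k.choose i.toNat)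
  else 0

/-- `c_i(m) = 2^m m! d_{m-i}(m)`, extended by `0` outside `0 ≤ i ≤ m`. -/
noncomputable def bmC (m : ℕ) (i : ℤ) : ℝ :=
  if 0 ≤ i ∧ i ≤ (m : ℤ) then (2 : ℝ) ^ m * (Nat.factorial m) * bmD m ((m : ℤ) - i) else 0

/-- summand of `bmD` -/
noncomputable def bmT (m k i : ℕ) : ℝ :=
  (2 : ℝ) ^ k * ((2 * m - 2 * k).choose (m - k)) * ((m + k).choose k) * (k.choose i)

/-- guarded summand -/
noncomputable def bmTg (m k i : ℕ) : ℝ := if i ≤ k ∧ k ≤ m then bmT m k i else 0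

/-- telescoping certificate -/
noncomputable def bmG (m k i : ℕ) : ℝ :=
  if k ≤ m + 1 then
    4 * k * (2 : ℝ) ^ k * ((2 * (m + 1) - 2 * k).choose (m + 1 - k)) *
      ((m + k).choose k) * (k.choose i)
  else 0

noncomputable def bmA (m i : ℕ) : ℝ := ∑ k ∈ Finset.Icc i m, bmT m k i

lemma choose_symm_aux (n a b : ℕ) (h : a + b = n) : n.choose a = n.choose b := by
  rw [← Nat.choose_symm (show a ≤ n by omega)]
  congr 1
  omega

-- choose identities over ℝ
lemma hcentral (n : ℕ) :
    ((n : ℝ) + 1) * ((2 * n + 2).choose (n + 1)) = 2 * (2 * (n : ℝ) + 1) * ((2 * n).choose n) := by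
  have h0 := Nat.add_one_mul_choose_eq (2 * n) n
  -- h0 : (2*n+1) * (2*n).choose n = (2*n+1).choose (n+1) * (n+1)
  have hs : (2 * n + 1).choose (n + 1) = (2 * n + 1).choose n := choose_symm_aux _ _ _ (by omega)
  rw [hs] at h0
  have h2 : (2 * n + 2).choose (n + 1) = 2 * (2 * n + 1).choose n := by
    have hp : (2 * n + 2).choose (n + 1) = (2 * n + 1).choose n + (2 * n + 1).choose (n + 1) :=
      Nat.choose_succ_succ (2 * n + 1) n
    rw [hs] at hp
    omega
  have key : (n + 1) * ((2 * n + 2).choose (n + 1)) = 2 * (2 * n + 1) * ((2 * n).choose n) :=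
    calc (n + 1) * ((2 * n + 2).choose (n + 1)) = (n + 1) * (2 * (2 * n + 1).choose n) := by
          rw [h2]
      _ = 2 * ((2 * n + 1).choose n * (n + 1)) := by ring
      _ = 2 * ((2 * n + 1) * (2 * n).choose n) := by rw [← h0]
      _ = 2 * (2 * n + 1) * ((2 * n).choose n) := by ring
  exact_mod_cast congrArg (Nat.cast : ℕ → ℝ) key

lemma hP1 (m k : ℕ) :
    ((m : ℝ) + 1) * ((m + 1 + k).choose k) = ((m : ℝ) + k + 1) * ((m + k).choose k) := by
  have h1 := Nat.add_one_mul_choose_eq (m + k) m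
  -- h1 : (m+k+1) * (m+k).choose m = (m+k+1).choose (m+1) * (m+1)
  have h3 : (m + k).choose m = (m + k).choose k := choose_symm_aux _ _ _ (by omega)
  have h2 : (m + k + 1).choose (m + 1) = (m + k + 1).choose k := choose_symm_aux _ _ _ (by omega)
  rw [h3, h2] at h1
  have h4 : m + 1 + k = m + k + 1 := by omega
  have key : (m + 1) * ((m + 1 + k).choose k) = (m + k + 1) * ((m + k).choose k) := by
    rw [h4, h1]; ring
  exact_mod_cast congrArg (Nat.cast : ℕ → ℝ) key

lemma hP2 (m k : ℕ) :
    ((k : ℝ) + 1) * ((m + k + 1).choose (k + 1)) = ((m : ℝ) + k + 1) * ((m + k).choose k) := by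
  have h0 := Nat.add_one_mul_choose_eq (m + k) k
  have key : (k + 1) * ((m + k + 1).choose (k + 1)) = (m + k + 1) * ((m + k).choose k) := by
    rw [h0]; ring
  exact_mod_cast congrArg (Nat.cast : ℕ → ℝ) key

lemma hQ1 (k j : ℕ) :
    ((j : ℝ) + 1) * ((k + 1).choose (j + 1)) = ((k : ℝ) + 1) * (k.choose j) := by
  have h0 := Nat.add_one_mul_choose_eq k j
  have key : (j + 1) * ((k + 1).choose (j + 1)) = (k + 1) * (k.choose j) := by
    rw [h0]; ring
  exact_mod_cast congrArg (Nat.cast : ℕ → ℝ) key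

lemma hQ2 (j l : ℕ) :
    ((j : ℝ) + 1) * ((j + 1 + l).choose (j + 1)) = ((l : ℝ) + 1) * ((j + 1 + l).choose j) := by
  have h0 := Nat.choose_succ_right_eq (j + 1 + l) j
  have hs : j + 1 + l - j = l + 1 := by omega
  rw [hs] at h0
  have key : (j + 1) * ((j + 1 + l).choose (j + 1)) = (l + 1) * ((j + 1 + l).choose j) := by
    rw [mul_comm (j + 1), mul_comm (l + 1)]; exact h0
  exact_mod_cast congrArg (Nat.cast : ℕ → ℝ) key

lemma hdouble (m : ℕ) :
    (((2 * m + 2).choose (m + 1) : ℕ) : ℝ) = 2 * (((2 * m + 1).choose (m + 1) : ℕ) : ℝ) := by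
  have hp : (2 * m + 2).choose (m + 1) = (2 * m + 1).choose m + (2 * m + 1).choose (m + 1) :=
    Nat.choose_succ_succ (2 * m + 1) m
  have hs : (2 * m + 1).choose m = (2 * m + 1).choose (m + 1) := by
    rw [← Nat.choose_symm (show m + 1 ≤ 2 * m + 1 by omega)]
    congr 1
    omega
  rw [hs] at hp
  push_cast [hp]
  ring

lemma keyS (m j k : ℕ) :
    2 * ((m : ℝ) + 1) * bmTg (m + 1) k (j + 1) + bmG m (k + 1) (j + 1)
      = 4 * (4 * (m : ℝ) + 2 * (j : ℝ) + 5) * bmTg m k (j + 1)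
        + 8 * ((m : ℝ) + (j : ℝ) + 1) * bmTg m k j + bmG m k (j + 1) := by
  rcases le_or_gt k m with hkm | hkm
  · -- k ≤ m
    rcases le_or_gt (j + 1) k with hjk | hjk
    · -- generic case  j+1 ≤ k ≤ m
      obtain ⟨n, rfl⟩ : ∃ n, m = k + n := ⟨m - k, by omega⟩
      obtain ⟨l, rfl⟩ : ∃ l, k = j + 1 + l := ⟨k - (j + 1), by omega⟩
      set k := j + 1 + l with hk
      set m := k + n with hm
      have hT1 : bmTg (m + 1) k (j + 1)
          = 2 ^ k * (((2 * n + 2).choose (n + 1) : ℕ) : ℝ) * (((m + 1 + k).choose k : ℕ) : ℝ)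
            * ((k.choose (j + 1) : ℕ) : ℝ) := by
        rw [bmTg, if_pos ⟨by omega, by omega⟩, bmT,
          show 2 * (m + 1) - 2 * k = 2 * n + 2 by omega, show m + 1 - k = n + 1 by omega]
      have hG1 : bmG m (k + 1) (j + 1)
          = 4 * ((k : ℝ) + 1) * 2 ^ k * 2 * (((2 * n).choose n : ℕ) : ℝ)
            * (((m + k + 1).choose (k + 1) : ℕ) : ℝ) * ((((k + 1).choose (j + 1)) : ℕ) : ℝ) := by
        rw [bmG, if_pos (by omega : k + 1 ≤ m + 1),
          show 2 * (m + 1) - 2 * (k + 1) = 2 * n by omega,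
          show m + 1 - (k + 1) = n by omega, show m + (k + 1) = m + k + 1 by omega]
        push_cast
        ring
      have hT2 : bmTg m k (j + 1)
          = 2 ^ k * (((2 * n).choose n : ℕ) : ℝ) * (((m + k).choose k : ℕ) : ℝ)
            * ((k.choose (j + 1) : ℕ) : ℝ) := by
        rw [bmTg, if_pos ⟨by omega, by omega⟩, bmT,
          show 2 * m - 2 * k = 2 * n by omega, show m - k = n by omega]
      have hT3 : bmTg m k j
          = 2 ^ k * (((2 * n).choose n : ℕ) : ℝ) * (((m + k).choose k : ℕ) : ℝ)
            * ((k.choose j : ℕ) : ℝ) := by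
        rw [bmTg, if_pos ⟨by omega, by omega⟩, bmT,
          show 2 * m - 2 * k = 2 * n by omega, show m - k = n by omega]
      have hG2 : bmG m k (j + 1)
          = 4 * (k : ℝ) * 2 ^ k * (((2 * n + 2).choose (n + 1) : ℕ) : ℝ)
            * (((m + k).choose k : ℕ) : ℝ) * ((k.choose (j + 1) : ℕ) : ℝ) := by
        rw [bmG, if_pos (by omega : k ≤ m + 1),
          show 2 * (m + 1) - 2 * k = 2 * n + 2 by omega, show m + 1 - k = n + 1 by omega]
      rw [hT1, hG1, hT2, hT3, hG2]
      have hn1 : ((n : ℝ) + 1) ≠ 0 := by positivity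
      have hm1 : ((m : ℝ) + 1) ≠ 0 := by positivity
      have hj1 : ((j : ℝ) + 1) ≠ 0 := by positivity
      have hk1 : ((k : ℝ) + 1) ≠ 0 := by positivity
      have x1 : (((2 * n + 2).choose (n + 1) : ℕ) : ℝ)
          = 2 * (2 * (n : ℝ) + 1) * (((2 * n).choose n : ℕ) : ℝ) / ((n : ℝ) + 1) := by
        rw [eq_div_iff hn1]; linarith [hcentral n]
      have x2 : (((m + 1 + k).choose k : ℕ) : ℝ)
          = ((m : ℝ) + k + 1) * (((m + k).choose k : ℕ) : ℝ) / ((m : ℝ) + 1) := by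
        rw [eq_div_iff hm1]; linarith [hP1 m k]
      have x3 : (((m + k + 1).choose (k + 1) : ℕ) : ℝ)
          = ((m : ℝ) + k + 1) * (((m + k).choose k : ℕ) : ℝ) / ((k : ℝ) + 1) := by
        rw [eq_div_iff hk1]; linarith [hP2 m k]
      have x4 : ((((k + 1).choose (j + 1)) : ℕ) : ℝ)
          = ((k : ℝ) + 1) * ((k.choose j : ℕ) : ℝ) / ((j : ℝ) + 1) := by
        rw [eq_div_iff hj1]; linarith [hQ1 k j]
      have x5 : ((k.choose (j + 1) : ℕ) : ℝ)
          = ((l : ℝ) + 1) * ((k.choose j : ℕ) : ℝ) / ((j : ℝ) + 1) := by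
        rw [eq_div_iff hj1]
        have := hQ2 j l
        rw [← hk] at this
        linarith
      rw [x1, x2, x3, x4, x5]
      have hmr : (m : ℝ) = (k : ℝ) + (n : ℝ) := by rw [hm]; push_cast; ring
      have hkr : (k : ℝ) = (j : ℝ) + 1 + (l : ℝ) := by rw [hk]; push_cast; ring
      rw [hmr, hkr]
      field_simp
      ring
    · -- k ≤ j
      rcases eq_or_lt_of_le (Nat.lt_succ_iff.mp hjk) with hkj | hkj
      · -- k = j
        subst hkj
        obtain ⟨n, rfl⟩ : ∃ n, m = k + n := ⟨m - k, by omega⟩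
        set m := k + n with hm
        have hT1 : bmTg (m + 1) k (k + 1) = 0 := by rw [bmTg, if_neg (by omega)]
        have hT2 : bmTg m k (k + 1) = 0 := by rw [bmTg, if_neg (by omega)]
        have hG2 : bmG m k (k + 1) = 0 := by
          rw [bmG, if_pos (by omega : k ≤ m + 1),
            Nat.choose_eq_zero_of_lt (show k < k + 1 by omega)]
          push_cast
          ring
        have hT3 : bmTg m k k
            = 2 ^ k * (((2 * n).choose n : ℕ) : ℝ) * (((m + k).choose k : ℕ) : ℝ) := by
          rw [bmTg, if_pos ⟨le_refl k, by omega⟩, bmT,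
            show 2 * m - 2 * k = 2 * n by omega, show m - k = n by omega,
            Nat.choose_self]
          push_cast
          ring
        have hG1 : bmG m (k + 1) (k + 1)
            = 4 * ((k : ℝ) + 1) * 2 ^ k * 2 * (((2 * n).choose n : ℕ) : ℝ)
              * (((m + k + 1).choose (k + 1) : ℕ) : ℝ) := by
          rw [bmG, if_pos (by omega : k + 1 ≤ m + 1),
            show 2 * (m + 1) - 2 * (k + 1) = 2 * n by omega,
            show m + 1 - (k + 1) = n by omega, show m + (k + 1) = m + k + 1 by omega,
            Nat.choose_self]
          push_cast
          ring
        rw [hT1, hT2, hT3, hG1, hG2]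
        have h3 := hP2 m k
        linear_combination (8 * (2 : ℝ) ^ k * (((2 * n).choose n : ℕ) : ℝ)) * h3
      · -- k < j : everything vanishes
        have hT1 : bmTg (m + 1) k (j + 1) = 0 := by rw [bmTg, if_neg (by omega)]
        have hT2 : bmTg m k (j + 1) = 0 := by rw [bmTg, if_neg (by omega)]
        have hT3 : bmTg m k j = 0 := by rw [bmTg, if_neg (by omega)]
        have hG1 : bmG m (k + 1) (j + 1) = 0 := by
          rw [bmG, if_pos (by omega : k + 1 ≤ m + 1),
            Nat.choose_eq_zero_of_lt (show k + 1 < j + 1 by omega)]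
          push_cast; ring
        have hG2 : bmG m k (j + 1) = 0 := by
          rw [bmG, if_pos (by omega : k ≤ m + 1),
            Nat.choose_eq_zero_of_lt (show k < j + 1 by omega)]
          push_cast; ring
        rw [hT1, hT2, hT3, hG1, hG2]
        ring
  · rcases eq_or_lt_of_le (show m + 1 ≤ k from hkm) with hk1 | hk1
    · -- k = m + 1
      subst hk1
      have hT2 : bmTg m (m + 1) (j + 1) = 0 := by rw [bmTg, if_neg (by omega)]
      have hT3 : bmTg m (m + 1) j = 0 := by rw [bmTg, if_neg (by omega)]
      have hG1 : bmG m (m + 1 + 1) (j + 1) = 0 := by rw [bmG, if_neg (by omega)]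
      have hT1 : bmTg (m + 1) (m + 1) (j + 1)
          = 2 ^ (m + 1) * (((2 * m + 2).choose (m + 1) : ℕ) : ℝ)
            * (((m + 1).choose (j + 1) : ℕ) : ℝ) := by
        rw [bmTg]
        rcases le_or_gt (j + 1) (m + 1) with h | h
        · rw [if_pos ⟨h, le_refl _⟩, bmT,
            show 2 * (m + 1) - 2 * (m + 1) = 0 by omega,
            show m + 1 - (m + 1) = 0 by omega, Nat.choose_zero_right,
            show m + 1 + (m + 1) = 2 * m + 2 by omega]
          push_cast
          ring
        · rw [if_neg (by omega), Nat.choose_eq_zero_of_lt (show m + 1 < j + 1 by omega)]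
          push_cast
          ring
      have hG2 : bmG m (m + 1) (j + 1)
          = 4 * ((m : ℝ) + 1) * 2 ^ (m + 1) * (((2 * m + 1).choose (m + 1) : ℕ) : ℝ)
            * (((m + 1).choose (j + 1) : ℕ) : ℝ) := by
        rw [bmG, if_pos (le_refl _),
          show 2 * (m + 1) - 2 * (m + 1) = 0 by omega,
          show m + 1 - (m + 1) = 0 by omega, Nat.choose_zero_right,
          show m + (m + 1) = 2 * m + 1 by omega]
        push_cast
        ring
      rw [hT1, hT2, hT3, hG1, hG2, hdouble m]
      ring
    · -- k ≥ m + 2 : everything vanishes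
      have hT1 : bmTg (m + 1) k (j + 1) = 0 := by rw [bmTg, if_neg (by omega)]
      have hT2 : bmTg m k (j + 1) = 0 := by rw [bmTg, if_neg (by omega)]
      have hT3 : bmTg m k j = 0 := by rw [bmTg, if_neg (by omega)]
      have hG1 : bmG m (k + 1) (j + 1) = 0 := by rw [bmG, if_neg (by omega)]
      have hG2 : bmG m k (j + 1) = 0 := by rw [bmG, if_neg (by omega)]
      rw [hT1, hT2, hT3, hG1, hG2]
      ring

lemma key0 (m k : ℕ) :
    2 * ((m : ℝ) + 1) * bmTg (m + 1) k 0 + bmG m (k + 1) 0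
      = 4 * (4 * (m : ℝ) + 3) * bmTg m k 0 + bmG m k 0 := by
  rcases le_or_gt k m with hkm | hkm
  · obtain ⟨n, rfl⟩ : ∃ n, m = k + n := ⟨m - k, by omega⟩
    set m := k + n with hm
    have hT1 : bmTg (m + 1) k 0
        = 2 ^ k * (((2 * n + 2).choose (n + 1) : ℕ) : ℝ) * (((m + 1 + k).choose k : ℕ) : ℝ) := by
      rw [bmTg, if_pos ⟨Nat.zero_le _, by omega⟩, bmT,
        show 2 * (m + 1) - 2 * k = 2 * n + 2 by omega, show m + 1 - k = n + 1 by omega,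
        Nat.choose_zero_right]
      push_cast; ring
    have hG1 : bmG m (k + 1) 0
        = 4 * ((k : ℝ) + 1) * 2 ^ k * 2 * (((2 * n).choose n : ℕ) : ℝ)
          * (((m + k + 1).choose (k + 1) : ℕ) : ℝ) := by
      rw [bmG, if_pos (by omega : k + 1 ≤ m + 1),
        show 2 * (m + 1) - 2 * (k + 1) = 2 * n by omega,
        show m + 1 - (k + 1) = n by omega, show m + (k + 1) = m + k + 1 by omega,
        Nat.choose_zero_right]
      push_cast; ring
    have hT2 : bmTg m k 0
        = 2 ^ k * (((2 * n).choose n : ℕ) : ℝ) * (((m + k).choose k : ℕ) : ℝ) := by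
      rw [bmTg, if_pos ⟨Nat.zero_le _, by omega⟩, bmT,
        show 2 * m - 2 * k = 2 * n by omega, show m - k = n by omega,
        Nat.choose_zero_right]
      push_cast; ring
    have hG2 : bmG m k 0
        = 4 * (k : ℝ) * 2 ^ k * (((2 * n + 2).choose (n + 1) : ℕ) : ℝ)
          * (((m + k).choose k : ℕ) : ℝ) := by
      rw [bmG, if_pos (by omega : k ≤ m + 1),
        show 2 * (m + 1) - 2 * k = 2 * n + 2 by omega, show m + 1 - k = n + 1 by omega,
        Nat.choose_zero_right]
      push_cast; ring
    rw [hT1, hG1, hT2, hG2]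
    have hn1 : ((n : ℝ) + 1) ≠ 0 := by positivity
    have hm1 : ((m : ℝ) + 1) ≠ 0 := by positivity
    have hk1 : ((k : ℝ) + 1) ≠ 0 := by positivity
    have x1 : (((2 * n + 2).choose (n + 1) : ℕ) : ℝ)
        = 2 * (2 * (n : ℝ) + 1) * (((2 * n).choose n : ℕ) : ℝ) / ((n : ℝ) + 1) := by
      rw [eq_div_iff hn1]; linarith [hcentral n]
    have x2 : (((m + 1 + k).choose k : ℕ) : ℝ)
        = ((m : ℝ) + k + 1) * (((m + k).choose k : ℕ) : ℝ) / ((m : ℝ) + 1) := by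
      rw [eq_div_iff hm1]; linarith [hP1 m k]
    have x3 : (((m + k + 1).choose (k + 1) : ℕ) : ℝ)
        = ((m : ℝ) + k + 1) * (((m + k).choose k : ℕ) : ℝ) / ((k : ℝ) + 1) := by
      rw [eq_div_iff hk1]; linarith [hP2 m k]
    rw [x1, x2, x3]
    have hmr : (m : ℝ) = (k : ℝ) + (n : ℝ) := by rw [hm]; push_cast; ring
    rw [hmr]
    field_simp
    ring
  · rcases eq_or_lt_of_le (show m + 1 ≤ k from hkm) with hk1 | hk1
    · subst hk1
      have hG1 : bmG m (m + 1 + 1) 0 = 0 := by rw [bmG, if_neg (by omega)]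
      have hT2 : bmTg m (m + 1) 0 = 0 := by rw [bmTg, if_neg (by omega)]
      have hT1 : bmTg (m + 1) (m + 1) 0
          = 2 ^ (m + 1) * (((2 * m + 2).choose (m + 1) : ℕ) : ℝ) := by
        rw [bmTg, if_pos ⟨Nat.zero_le _, le_refl _⟩, bmT,
          show 2 * (m + 1) - 2 * (m + 1) = 0 by omega,
          show m + 1 - (m + 1) = 0 by omega, Nat.choose_zero_right,
          show m + 1 + (m + 1) = 2 * m + 2 by omega, Nat.choose_zero_right]
        push_cast; ring
      have hG2 : bmG m (m + 1) 0
          = 4 * ((m : ℝ) + 1) * 2 ^ (m + 1) * (((2 * m + 1).choose (m + 1) : ℕ) : ℝ) := by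
        rw [bmG, if_pos (le_refl _),
          show 2 * (m + 1) - 2 * (m + 1) = 0 by omega,
          show m + 1 - (m + 1) = 0 by omega, Nat.choose_zero_right,
          show m + (m + 1) = 2 * m + 1 by omega, Nat.choose_zero_right]
        push_cast; ring
      rw [hT1, hT2, hG1, hG2, hdouble m]
      ring
    · have hT1 : bmTg (m + 1) k 0 = 0 := by rw [bmTg, if_neg (by omega)]
      have hT2 : bmTg m k 0 = 0 := by rw [bmTg, if_neg (by omega)]
      have hG1 : bmG m (k + 1) 0 = 0 := by rw [bmG, if_neg (by omega)]
      have hG2 : bmG m k 0 = 0 := by rw [bmG, if_neg (by omega)]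
      rw [hT1, hT2, hG1, hG2]
      ring

lemma sum_bmTg (m i N : ℕ) (h : m + 1 ≤ N) :
    ∑ k ∈ Finset.range N, bmTg m k i = bmA m i := by
  rw [bmA]
  rw [← Finset.sum_subset (show Finset.Icc i m ⊆ Finset.range N by
    intro x hx
    simp only [Finset.mem_Icc] at hx
    simp only [Finset.mem_range]
    omega)]
  · exact Finset.sum_congr rfl fun k hk => by
      simp only [Finset.mem_Icc] at hk
      rw [bmTg, if_pos ⟨hk.1, hk.2⟩]
  · intro x _ hx
    simp only [Finset.mem_Icc] at hx
    rw [bmTg, if_neg (by omega)]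

lemma bmG_zero (m i : ℕ) : bmG m 0 i = 0 := by
  rw [bmG, if_pos (by omega)]
  simp

lemma bmG_end (m i : ℕ) : bmG m (m + 2) i = 0 := by
  rw [bmG, if_neg (by omega)]

lemma bmG_shift (m i : ℕ) :
    ∑ k ∈ Finset.range (m + 2), bmG m (k + 1) i = ∑ k ∈ Finset.range (m + 2), bmG m k i := by
  have h := Finset.sum_range_sub' (fun k => bmG m k i) (m + 2)
  rw [Finset.sum_sub_distrib] at h
  rw [bmG_zero, bmG_end] at h
  linarith

lemma sumrecS (m j : ℕ) :
    2 * ((m : ℝ) + 1) * bmA (m + 1) (j + 1)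
      = 4 * (4 * (m : ℝ) + 2 * (j : ℝ) + 5) * bmA m (j + 1)
        + 8 * ((m : ℝ) + (j : ℝ) + 1) * bmA m j := by
  have hsum : ∑ k ∈ Finset.range (m + 2),
        (2 * ((m : ℝ) + 1) * bmTg (m + 1) k (j + 1) + bmG m (k + 1) (j + 1))
      = ∑ k ∈ Finset.range (m + 2),
        (4 * (4 * (m : ℝ) + 2 * (j : ℝ) + 5) * bmTg m k (j + 1)
          + (8 * ((m : ℝ) + (j : ℝ) + 1) * bmTg m k j + bmG m k (j + 1))) :=
    Finset.sum_congr rfl fun k _ => by linarith [keyS m j k]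
  simp only [Finset.sum_add_distrib, ← Finset.mul_sum] at hsum
  rw [sum_bmTg (m + 1) (j + 1) (m + 2) (by omega), sum_bmTg m (j + 1) (m + 2) (by omega),
    sum_bmTg m j (m + 2) (by omega), bmG_shift] at hsum
  linarith

lemma sumrec0 (m : ℕ) :
    2 * ((m : ℝ) + 1) * bmA (m + 1) 0 = 4 * (4 * (m : ℝ) + 3) * bmA m 0 := by
  have hsum : ∑ k ∈ Finset.range (m + 2),
        (2 * ((m : ℝ) + 1) * bmTg (m + 1) k 0 + bmG m (k + 1) 0)
      = ∑ k ∈ Finset.range (m + 2),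
        (4 * (4 * (m : ℝ) + 3) * bmTg m k 0 + bmG m k 0) :=
    Finset.sum_congr rfl fun k _ => by linarith [key0 m k]
  simp only [Finset.sum_add_distrib, ← Finset.mul_sum] at hsum
  rw [sum_bmTg (m + 1) 0 (m + 2) (by omega), sum_bmTg m 0 (m + 2) (by omega),
    bmG_shift] at hsum
  linarith

lemma bmA_empty (m : ℕ) : bmA m (m + 1) = 0 := by
  rw [bmA, Finset.Icc_eq_empty (by omega), Finset.sum_empty]

lemma bmD_nat (m n : ℕ) (h : n ≤ m) :
    bmD m (n : ℤ) = (1 / 4 ^ m) * bmA m n := by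
  rw [bmD, if_pos ⟨Int.natCast_nonneg n, by exact_mod_cast h⟩]
  simp only [Int.toNat_natCast, bmA, bmT]

lemma bmC_nat (m n : ℕ) (h : n ≤ m) :
    bmC m (n : ℤ) = (2 : ℝ) ^ m * (Nat.factorial m) * ((1 / 4 ^ m) * bmA m (m - n)) := by
  rw [bmC, if_pos ⟨Int.natCast_nonneg n, by exact_mod_cast h⟩,
    show (m : ℤ) - (n : ℤ) = ((m - n : ℕ) : ℤ) by omega, bmD_nat m (m - n) (by omega)]

theorem boros_moll_c_recurrence :
    (∀ (m : ℕ) (i : ℤ), 0 ≤ i → i ≤ (m : ℤ) + 1 →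
      bmC (m + 1) i = (4 * (m : ℝ) - 2 * (i : ℝ) + 2) * bmC m i
        + (6 * (m : ℝ) - 2 * (i : ℝ) + 5) * bmC m (i - 1)) ∧
    bmC 0 0 = 1 ∧ (∀ i : ℤ, i ≠ 0 → bmC 0 i = 0) := by
  refine ⟨?_, ?_, ?_⟩
  · intro m i h0 h1
    obtain ⟨a, rfl⟩ : ∃ a : ℕ, i = (a : ℤ) := ⟨i.toNat, (Int.toNat_of_nonneg h0).symm⟩
    have ham : a ≤ m + 1 := by exact_mod_cast h1
    have hfact : ((Nat.factorial (m + 1) : ℕ) : ℝ) = ((m : ℝ) + 1) * (Nat.factorial m) := by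
      rw [Nat.factorial_succ]; push_cast; ring
    have hL : bmC (m + 1) (a : ℤ)
        = (2 : ℝ) ^ (m + 1) * (Nat.factorial (m + 1)) * ((1 / 4 ^ (m + 1)) * bmA (m + 1) (m + 1 - a)) :=
      bmC_nat (m + 1) a ham
    rcases Nat.eq_zero_or_pos a with rfl | hapos
    · -- a = 0
      have hm1 : bmC m ((0 : ℕ) : ℤ) = (2 : ℝ) ^ m * (Nat.factorial m) * ((1 / 4 ^ m) * bmA m m) := by
        simpa using bmC_nat m 0 (by omega)
      have hm2 : bmC m (((0 : ℕ) : ℤ) - 1) = 0 := by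
        rw [bmC, if_neg (by omega)]
      rw [hL, hm1, hm2, hfact]
      have hrec := sumrecS m m
      rw [bmA_empty m] at hrec
      simp only [Nat.sub_zero, Nat.cast_zero]
      linear_combination ((2 : ℝ) ^ m * (Nat.factorial m) / 4 ^ (m + 1)) * hrec
    · rcases Nat.lt_or_ge a (m + 1) with ham' | ham'
      · -- 1 ≤ a ≤ m
        obtain ⟨j, hj⟩ : ∃ j : ℕ, m - a = j ∧ m = a + j := ⟨m - a, rfl, by omega⟩
        have hm1 : bmC m ((a : ℕ) : ℤ)
            = (2 : ℝ) ^ m * (Nat.factorial m) * ((1 / 4 ^ m) * bmA m (m - a)) :=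
          bmC_nat m a (by omega)
        obtain ⟨b, hb⟩ : ∃ b : ℕ, a = b + 1 := ⟨a - 1, by omega⟩
        have hm2 : bmC m (((a : ℕ) : ℤ) - 1)
            = (2 : ℝ) ^ m * (Nat.factorial m) * ((1 / 4 ^ m) * bmA m (m - b)) := by
          rw [show ((a : ℕ) : ℤ) - 1 = ((b : ℕ) : ℤ) by omega]
          exact bmC_nat m b (by omega)
        have hrec := sumrecS m (m - a)
        have hcast : ((m - a : ℕ) : ℝ) = (m : ℝ) - (a : ℝ) := by
          rw [Nat.cast_sub (by omega)]
        rw [hcast] at hrec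
        rw [hL, hm1, hm2, hfact, show m + 1 - a = m - a + 1 by omega,
          show m - b = m - a + 1 by omega]
        push_cast
        linear_combination ((2 : ℝ) ^ m * (Nat.factorial m) / 4 ^ (m + 1)) * hrec
      · -- a = m + 1
        have haeq : a = m + 1 := by omega
        subst haeq
        have hm1 : bmC m ((m + 1 : ℕ) : ℤ) = 0 := by
          rw [bmC, if_neg (by push_cast; omega)]
        have hm2 : bmC m (((m + 1 : ℕ) : ℤ) - 1)
            = (2 : ℝ) ^ m * (Nat.factorial m) * ((1 / 4 ^ m) * bmA m 0) := by
          rw [show ((m + 1 : ℕ) : ℤ) - 1 = ((m : ℕ) : ℤ) by omega]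
          simpa using bmC_nat m m (by omega)
        rw [hL, hm1, hm2, hfact]
        have hrec := sumrec0 m
        simp only [Nat.sub_self]
        push_cast
        linear_combination ((2 : ℝ) ^ m * (Nat.factorial m) / 4 ^ (m + 1)) * hrec
  · rw [bmC, if_pos ⟨le_refl _, by omega⟩]
    norm_num
    rw [bmD, if_pos ⟨le_refl _, le_refl _⟩]
    simp [bmT]
  · intro i hi
    rw [bmC]
    rcases lt_or_gt_of_ne hi with h | h
    · rw [if_neg (by omega)]
    · rw [if_neg (by omega)]
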